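/- arXiv:2603.16720 — 4 statements merged into one kernel-verified Lean document; each statement's English description precedes it below -/
import Mathlib

section
/- Let P be a probability measure and Q₁,...,Qₘ be probability measures all absolutely continuous with respect to P, with Radon-Nikodym derivatives f_i = dQ_i/dP. Let π₁,...,πₘ ∈ [0,1] with Σ π_i = 1, and suppose E_P[∏ f_i^{π_i}] ∈ (0, ∞). Define the probability measure Q^b by dQ^b/dP = ∏ f_i^{π_i} / E_P[∏ f_i^{π_i}]. Then for every probability measure Q ≪ P with finite KL divergences to each Q_i, the identity Σ π_i · D_KL(Q ‖ Q_i) = D_KL(Q ‖ Q^b) + c holds, where c = −log E_P[∏ f_i^{π_i}]. -/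
open MeasureTheory Real Finset

/-- KL decomposition identity for the weighted barycentre: if `Q_i` have `P`-densities `f i`,
`Q` has `P`-density `g` (with `Q ≪ Q_i`), and `Q^b` has density `(∏ f i ^ w i) / Z` with
`Z = E_P[∏ f i ^ w i] ∈ (0,∞)`, then
`Σ π i · D_KL(Q‖Q_i) = D_KL(Q‖Q^b) + c` with `c = −log Z`.
Here `D_KL(Q‖Q_i) = ∫ g log (g / f i) dP` and `D_KL(Q‖Q^b) = ∫ g log (g / ((∏ f i ^ w i)/Z)) dP`. -/
theorem kl_barycentre_decomposition
    {Ω : Type*} [MeasurableSpace Ω] (P : Measure Ω) [IsProbabilityMeasure P]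
    (m : ℕ) (f : Fin m → Ω → ℝ) (w : Fin m → ℝ)
    (hw : ∀ i, w i ∈ Set.Icc (0:ℝ) 1) (hws : ∑ i, w i = 1)
    (hfmeas : ∀ i, Measurable (f i))
    (hfpos : ∀ i, ∀ᵐ ω ∂P, 0 < f i ω)
    (hfint : ∀ i, Integrable (f i) P) (hfone : ∀ i, ∫ ω, f i ω ∂P = 1)
    (hprodint : Integrable (fun ω => ∏ i, f i ω ^ w i) P)
    (Z : ℝ) (hZ : Z = ∫ ω, ∏ i, f i ω ^ w i ∂P) (hZpos : 0 < Z)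
    (g : Ω → ℝ) (hgmeas : Measurable g)
    (hgpos : ∀ᵐ ω ∂P, 0 ≤ g ω) (hgone : ∫ ω, g ω ∂P = 1)
    -- Q ≪ Q_i automatically since the Q_i are equivalent to P; finite KL divergences:
    (hKLi : ∀ i, Integrable (fun ω => g ω * Real.log (g ω / f i ω)) P)
    (hKLb : Integrable (fun ω => g ω * Real.log (g ω / ((∏ i, f i ω ^ w i) / Z))) P) :
    ∑ i, w i * ∫ ω, g ω * Real.log (g ω / f i ω) ∂P
      = (∫ ω, g ω * Real.log (g ω / ((∏ i, f i ω ^ w i) / Z)) ∂P) + (- Real.log Z) := by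
  have hg_int : Integrable g P := integrable_of_integral_eq_one hgone
  -- a.e. pointwise identity
  have hae : ∀ᵐ ω ∂P,
      ∑ i, w i * (g ω * Real.log (g ω / f i ω))
        = g ω * Real.log (g ω / ((∏ i, f i ω ^ w i) / Z)) - g ω * Real.log Z := by
    have hall : ∀ᵐ ω ∂P, ∀ i, 0 < f i ω := ae_all_iff.2 hfpos
    filter_upwards [hall, hgpos] with ω hf hg
    rcases eq_or_lt_of_le hg with hg0 | hg0
    · simp [← hg0]
    · have hprodpos : 0 < ∏ i, f i ω ^ w i :=
        Finset.prod_pos fun i _ => Real.rpow_pos_of_pos (hf i) _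
      have hlogprod : Real.log (∏ i, f i ω ^ w i) = ∑ i, w i * Real.log (f i ω) := by
        rw [Real.log_prod (fun i _ => (Real.rpow_pos_of_pos (hf i) _).ne')]
        exact Finset.sum_congr rfl fun i _ => Real.log_rpow (hf i) _
      have h1 : ∀ i, Real.log (g ω / f i ω) = Real.log (g ω) - Real.log (f i ω) :=
        fun i => Real.log_div hg0.ne' (hf i).ne'
      have h2 : Real.log (g ω / ((∏ i, f i ω ^ w i) / Z))
          = Real.log (g ω) - (Real.log (∏ i, f i ω ^ w i) - Real.log Z) := by
        rw [Real.log_div hg0.ne' (div_pos hprodpos hZpos).ne',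
          Real.log_div hprodpos.ne' hZpos.ne']
      simp only [h1, h2, hlogprod]
      calc ∑ x, w x * (g ω * (Real.log (g ω) - Real.log (f x ω)))
          = ∑ x, (w x * (g ω * Real.log (g ω)) - g ω * (w x * Real.log (f x ω))) :=
            Finset.sum_congr rfl fun i _ => by ring
        _ = (∑ x, w x) * (g ω * Real.log (g ω)) - g ω * ∑ x, w x * Real.log (f x ω) := by
            rw [Finset.sum_sub_distrib, ← Finset.sum_mul, Finset.mul_sum]
        _ = _ := by rw [hws]; ring
  calc ∑ i, w i * ∫ ω, g ω * Real.log (g ω / f i ω) ∂P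
      = ∑ i, ∫ ω, w i * (g ω * Real.log (g ω / f i ω)) ∂P := by
        simp [integral_const_mul]
    _ = ∫ ω, ∑ i, w i * (g ω * Real.log (g ω / f i ω)) ∂P :=
        (integral_finset_sum _ fun i _ => (hKLi i).const_mul _).symm
    _ = ∫ ω, (g ω * Real.log (g ω / ((∏ i, f i ω ^ w i) / Z)) - g ω * Real.log Z) ∂P :=
        integral_congr_ae hae
    _ = (∫ ω, g ω * Real.log (g ω / ((∏ i, f i ω ^ w i) / Z)) ∂P) - Real.log Z := by
        rw [integral_sub hKLb (hg_int.mul_const _), integral_mul_const, hgone, one_mul]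
    _ = _ := by ring
end

section
/- (KL barycentre) Let Q₁,...,Qₘ be probability measures equivalent to P with RN derivatives f_i, weights π_i ∈ (0,1) summing to 1, and 0 < E_P[∏ f_i^{π_i}] < ∞. Define Q^b by dQ^b/dP = ∏ f_i^{π_i} / E_P[∏ f_i^{π_i}]. Then Q^b is the unique minimizer, over probability measures Q ≪ P, of the weighted objective Σ_{i=1}^m π_i · D_KL(Q ‖ Q_i). -/
open MeasureTheory Real Finset

theorem gibbs_aux {Ω : Type*} [MeasurableSpace Ω] (P : Measure Ω) [IsProbabilityMeasure P]
    (g hb : Ω → ℝ) (hgint : Integrable g P) (hbint : Integrable hb P)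
    (hgnn : ∀ᵐ ω ∂P, 0 ≤ g ω) (hbpos : ∀ᵐ ω ∂P, 0 < hb ω)
    (hgone : ∫ ω, g ω ∂P = 1) (hbone : ∫ ω, hb ω ∂P = 1)
    (hint : Integrable (fun ω => g ω * Real.log (g ω / hb ω)) P) :
    0 ≤ ∫ ω, g ω * Real.log (g ω / hb ω) ∂P ∧
      ((∫ ω, g ω * Real.log (g ω / hb ω) ∂P) = 0 → g =ᵐ[P] hb) := by
  set φ : Ω → ℝ := fun ω => g ω * Real.log (g ω / hb ω) - (g ω - hb ω) with hφ
  have hφint : Integrable φ P := hint.sub (hgint.sub hbint)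
  have hφnn : ∀ᵐ ω ∂P, 0 ≤ φ ω := by
    filter_upwards [hgnn, hbpos] with ω hg hb'
    rcases eq_or_lt_of_le hg with h0 | h0
    · simp [hφ, ← h0]; linarith
    · have hlog : Real.log (hb ω / g ω) ≤ hb ω / g ω - 1 :=
        Real.log_le_sub_one_of_pos (div_pos hb' h0)
      have hinv : Real.log (hb ω / g ω) = - Real.log (g ω / hb ω) := by
        rw [Real.log_div hb'.ne' h0.ne', Real.log_div h0.ne' hb'.ne']; ring
      rw [hinv] at hlog
      have h2 : g ω * (- Real.log (g ω / hb ω)) ≤ g ω * (hb ω / g ω - 1) :=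
        mul_le_mul_of_nonneg_left hlog hg
      have h3 : g ω * (hb ω / g ω - 1) = hb ω - g ω := by field_simp
      simp only [hφ]; nlinarith
  have hφi : ∫ ω, φ ω ∂P = ∫ ω, g ω * Real.log (g ω / hb ω) ∂P := by
    have h4 : Integrable (fun ω => g ω - hb ω) P := hgint.sub hbint
    simp only [hφ]
    rw [integral_sub hint h4, integral_sub hgint hbint, hgone, hbone]
    ring
  constructor
  · rw [← hφi]; exact integral_nonneg_of_ae hφnn
  · intro heq
    have hφ0 : φ =ᵐ[P] 0 := by
      rw [← integral_eq_zero_iff_of_nonneg_ae hφnn hφint, hφi, heq]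
    filter_upwards [hgnn, hbpos, hφ0] with ω hg hb' h0
    simp only [hφ, Pi.zero_apply] at h0
    have heqp : g ω * Real.log (g ω / hb ω) = g ω - hb ω := by linarith
    rcases eq_or_lt_of_le hg with hz | hz
    · exfalso; rw [← hz] at heqp; simp at heqp; linarith
    · by_contra hne
      have hne' : hb ω / g ω ≠ 1 := by
        intro h1
        exact hne ((div_eq_one_iff_eq hz.ne').mp h1).symm
      have hlog : Real.log (hb ω / g ω) < hb ω / g ω - 1 :=
        Real.log_lt_sub_one_of_pos (div_pos hb' hz) hne'
      have hinv : Real.log (hb ω / g ω) = - Real.log (g ω / hb ω) := by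
        rw [Real.log_div hb'.ne' hz.ne', Real.log_div hz.ne' hb'.ne']; ring
      rw [hinv] at hlog
      have h2 : g ω * (- Real.log (g ω / hb ω)) < g ω * (hb ω / g ω - 1) :=
        (mul_lt_mul_iff_right₀ hz).mpr hlog
      have h3 : g ω * (hb ω / g ω - 1) = hb ω - g ω := by field_simp
      nlinarith

theorem sum_decomp_aux {Ω : Type*} [MeasurableSpace Ω] (P : Measure Ω) [IsProbabilityMeasure P]
    (m : ℕ) (f : Fin m → Ω → ℝ) (w : Fin m → ℝ) (hws : ∑ i, w i = 1)
    (hfpos : ∀ i, ∀ᵐ ω ∂P, 0 < f i ω)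
    (Z : ℝ) (hZpos : 0 < Z)
    (hb : Ω → ℝ) (hhb : hb = fun ω => (∏ i, f i ω ^ w i) / Z)
    (g : Ω → ℝ) (hgint0 : Integrable g P) (hgnn : ∀ᵐ ω ∂P, 0 ≤ g ω)
    (hgone : ∫ ω, g ω ∂P = 1)
    (hgint : ∀ i, Integrable (fun ω => g ω * Real.log (g ω / f i ω)) P) :
    Integrable (fun ω => g ω * Real.log (g ω / hb ω)) P ∧
      (∑ i, w i * ∫ ω, g ω * Real.log (g ω / f i ω) ∂P)
        = (∫ ω, g ω * Real.log (g ω / hb ω) ∂P) - Real.log Z := by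
  have key : ∀ᵐ ω ∂P, ∑ i, w i * (g ω * Real.log (g ω / f i ω))
      = g ω * Real.log (g ω / hb ω) - g ω * Real.log Z := by
    filter_upwards [ae_all_iff.2 hfpos, hgnn] with ω hf hg
    have hbω : hb ω = (∏ i, f i ω ^ w i) / Z := by rw [hhb]
    have hbpos : 0 < hb ω := by
      rw [hbω]
      exact div_pos (Finset.prod_pos fun i _ => Real.rpow_pos_of_pos (hf i) _) hZpos
    rcases eq_or_lt_of_le hg with h0 | h0
    · simp [← h0]
    · have hlogb : Real.log (hb ω) = (∑ i, w i * Real.log (f i ω)) - Real.log Z := by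
        rw [hbω, Real.log_div (Finset.prod_pos fun i _ =>
            Real.rpow_pos_of_pos (hf i) _).ne' hZpos.ne',
          Real.log_prod fun i _ => (Real.rpow_pos_of_pos (hf i) _).ne']
        congr 1
        exact Finset.sum_congr rfl fun i _ => Real.log_rpow (hf i) _
      have hsum : ∑ i, w i * (g ω * Real.log (g ω / f i ω))
          = g ω * Real.log (g ω) - g ω * ∑ i, w i * Real.log (f i ω) := by
        have hterm : ∀ i ∈ Finset.univ, w i * (g ω * Real.log (g ω / f i ω))
            = w i * (g ω * Real.log (g ω)) - g ω * (w i * Real.log (f i ω)) := by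
          intro i _
          rw [Real.log_div h0.ne' (hf i).ne']
          ring
        rw [Finset.sum_congr rfl hterm, Finset.sum_sub_distrib, ← Finset.sum_mul,
          ← Finset.mul_sum, hws, one_mul]
      rw [hsum, Real.log_div h0.ne' hbpos.ne', hlogb]
      ring
  have hFint : Integrable (fun ω => (∑ i, w i * (g ω * Real.log (g ω / f i ω)))
      + g ω * Real.log Z) P :=
    (integrable_finset_sum _ fun i _ => (hgint i).const_mul (w i)).add
      (hgint0.mul_const _)
  have hGint : Integrable (fun ω => g ω * Real.log (g ω / hb ω)) P := by
    refine hFint.congr ?_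
    filter_upwards [key] with ω hk
    rw [hk]; ring
  refine ⟨hGint, ?_⟩
  have h1 : ∑ i, w i * ∫ ω, g ω * Real.log (g ω / f i ω) ∂P
      = ∫ ω, ∑ i, w i * (g ω * Real.log (g ω / f i ω)) ∂P := by
    rw [integral_finset_sum _ fun i _ => (hgint i).const_mul (w i)]
    exact Finset.sum_congr rfl fun i _ => (integral_const_mul _ _).symm
  rw [h1, integral_congr_ae key,
    integral_sub hGint (hgint0.mul_const _), integral_mul_const, hgone, one_mul]

/-- KL barycentre: the measure with `P`-density `h_b = (∏ f i ^ w i)/Z` is the unique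
minimizer of `Q ↦ Σ w i · D_KL(Q ‖ Q_i)` over probability measures `Q ≪ P` (represented by
their `P`-densities `g`). -/
theorem kl_barycentre_unique_minimizer
    {Ω : Type*} [MeasurableSpace Ω] (P : Measure Ω) [IsProbabilityMeasure P]
    (m : ℕ) (f : Fin m → Ω → ℝ) (w : Fin m → ℝ)
    (hw : ∀ i, w i ∈ Set.Ioo (0:ℝ) 1) (hws : ∑ i, w i = 1)
    (hfmeas : ∀ i, Measurable (f i))
    (hfpos : ∀ i, ∀ᵐ ω ∂P, 0 < f i ω)
    (hfint : ∀ i, Integrable (f i) P) (hfone : ∀ i, ∫ ω, f i ω ∂P = 1)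
    (hprodint : Integrable (fun ω => ∏ i, f i ω ^ w i) P)
    (Z : ℝ) (hZ : Z = ∫ ω, ∏ i, f i ω ^ w i ∂P) (hZpos : 0 < Z)
    (hb : Ω → ℝ) (hhb : hb = fun ω => (∏ i, f i ω ^ w i) / Z)
    (hKLbi : ∀ i, Integrable (fun ω => hb ω * Real.log (hb ω / f i ω)) P) :
    ∀ g : Ω → ℝ, Measurable g → (∀ᵐ ω ∂P, 0 ≤ g ω) → (∫ ω, g ω ∂P = 1) →
      (∀ i, Integrable (fun ω => g ω * Real.log (g ω / f i ω)) P) →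
      (∑ i, w i * ∫ ω, hb ω * Real.log (hb ω / f i ω) ∂P)
          ≤ ∑ i, w i * ∫ ω, g ω * Real.log (g ω / f i ω) ∂P ∧
      ((∑ i, w i * ∫ ω, g ω * Real.log (g ω / f i ω) ∂P)
          = ∑ i, w i * ∫ ω, hb ω * Real.log (hb ω / f i ω) ∂P → g =ᵐ[P] hb) := by
  intro g hgmeas hgnn hgone hgint
  -- basic facts about hb
  have hbpos : ∀ᵐ ω ∂P, 0 < hb ω := by
    filter_upwards [ae_all_iff.2 hfpos] with ω hf
    rw [hhb]
    exact div_pos (Finset.prod_pos fun i _ => Real.rpow_pos_of_pos (hf i) _) hZpos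
  have hbnn : ∀ᵐ ω ∂P, 0 ≤ hb ω := hbpos.mono fun ω h => h.le
  have hbint : Integrable hb P := by rw [hhb]; exact hprodint.div_const Z
  have hbone : ∫ ω, hb ω ∂P = 1 := by
    rw [hhb]
    simp only [div_eq_mul_inv]
    rw [integral_mul_const, ← hZ, mul_inv_cancel₀ hZpos.ne']
  -- g is integrable
  have hgint0 : Integrable g P := by
    by_contra h
    rw [integral_undef h] at hgone
    norm_num at hgone
  -- decompositions
  obtain ⟨hGint, hGsum⟩ := sum_decomp_aux P m f w hws hfpos Z hZpos hb hhb g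
    hgint0 hgnn hgone hgint
  obtain ⟨hBint, hBsum⟩ := sum_decomp_aux P m f w hws hfpos Z hZpos hb hhb hb
    hbint hbnn hbone hKLbi
  have hBzero : ∫ ω, hb ω * Real.log (hb ω / hb ω) ∂P = 0 := by
    rw [show (0:ℝ) = ∫ _ω, (0:ℝ) ∂P by simp]
    refine integral_congr_ae ?_
    filter_upwards [hbpos] with ω h
    rw [div_self h.ne', Real.log_one, mul_zero]
  rw [hBzero, zero_sub] at hBsum
  obtain ⟨hge, heq⟩ := gibbs_aux P g hb hgint0 hbint hgnn hbpos hgone hbone hGint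
  constructor
  · rw [hGsum, hBsum]; linarith
  · intro h
    rw [hGsum, hBsum] at h
    exact heq (by linarith)
end

section
/- (Constrained barycentre) Let Q^b be a probability measure equivalent to P, Y a random variable, and λ ∈ ℝ such that E^{Q^b}[exp(−λY)] < ∞ and E^{Q^b}[Y·exp(−λY)]/E^{Q^b}[exp(−λY)] = E_P[Y]. Define Q† by dQ†/dQ^b = exp(−λY)/E^{Q^b}[exp(−λY)]. Then for every probability measure Q̃ ≪ Q^b with E^{Q̃}[Y] = E_P[Y] and finite D_KL(Q̃ ‖ Q^b), the Pythagorean identity D_KL(Q̃ ‖ Q^b) = D_KL(Q̃ ‖ Q†) + D_KL(Q† ‖ Q^b) holds. Consequently Q† uniquely minimizes D_KL(Q ‖ Q^b) over probability measures Q ≪ Q^b with E^Q[Y] = E_P[Y]. -/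
open MeasureTheory Real

private lemma xlogx_ge {x : ℝ} (hx : 0 < x) : x - 1 ≤ x * Real.log x := by
  have h := Real.log_le_sub_one_of_pos (inv_pos.mpr hx)
  rw [Real.log_inv] at h
  have h2 : 1 - x⁻¹ ≤ Real.log x := by linarith
  have h3 := mul_le_mul_of_nonneg_left h2 hx.le
  rw [mul_sub, mul_one, mul_inv_cancel₀ hx.ne'] at h3
  linarith

private lemma xlogx_gt {x : ℝ} (hx : 0 < x) (hne : x ≠ 1) : x - 1 < x * Real.log x := by
  have hinv : x⁻¹ ≠ 1 := by
    intro h; exact hne (by rw [← inv_inv x, h, inv_one])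
  have h := Real.log_lt_sub_one_of_pos (inv_pos.mpr hx) hinv
  rw [Real.log_inv] at h
  have h2 : 1 - x⁻¹ < Real.log x := by linarith
  have h3 := mul_lt_mul_of_pos_left h2 hx
  rw [mul_sub, mul_one, mul_inv_cancel₀ hx.ne'] at h3
  linarith

/-- Constrained barycentre: Pythagorean identity and unique minimization. With base measure
`R = Q^b`, tilting parameter `lam` matching the `P`-mean `mu = E_P[Y]`, and
`q† = exp(−lam·Y)/E^R[exp(−lam·Y)]` the `R`-density of `Q†`, every `Q̃ ≪ R` (with `R`-density
`g`) satisfying the mean constraint and with finite KL divergence satisfies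
`D_KL(Q̃‖R) = D_KL(Q̃‖Q†) + D_KL(Q†‖R)`; consequently `Q†` is the unique KL-minimizer on
the constraint set. -/
theorem constrained_barycentre_pythagoras
    {Ω : Type*} [MeasurableSpace Ω]
    (P R : Measure Ω) [IsProbabilityMeasure P] [IsProbabilityMeasure R]
    (Y : Ω → ℝ) (hYmeas : Measurable Y) (hYintP : Integrable Y P)
    (mu : ℝ) (hmu : mu = ∫ ω, Y ω ∂P)
    (lam : ℝ)
    (hexp : Integrable (fun ω => Real.exp (-lam * Y ω)) R)
    (hexpY : Integrable (fun ω => Y ω * Real.exp (-lam * Y ω)) R)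
    (hlam : (∫ ω, Y ω * Real.exp (-lam * Y ω) ∂ R)
        / (∫ ω, Real.exp (-lam * Y ω) ∂ R) = mu)
    (qd : Ω → ℝ)
    (hqd : qd = fun ω => Real.exp (-lam * Y ω) / ∫ ω', Real.exp (-lam * Y ω') ∂ R)
    (hqdKL : Integrable (fun ω => qd ω * Real.log (qd ω)) R) :
    ∀ g : Ω → ℝ, Measurable g → (∀ᵐ ω ∂ R, 0 ≤ g ω) → (∫ ω, g ω ∂ R = 1) →
      (∫ ω, g ω * Y ω ∂ R = mu) →
      Integrable (fun ω => g ω * Real.log (g ω)) R →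
      Integrable (fun ω => g ω * Real.log (g ω / qd ω)) R →
      ((∫ ω, g ω * Real.log (g ω) ∂ R)
          = (∫ ω, g ω * Real.log (g ω / qd ω) ∂ R)
            + ∫ ω, qd ω * Real.log (qd ω) ∂ R) ∧
      (∫ ω, qd ω * Real.log (qd ω) ∂ R) ≤ (∫ ω, g ω * Real.log (g ω) ∂ R) ∧
      ((∫ ω, g ω * Real.log (g ω) ∂ R) = (∫ ω, qd ω * Real.log (qd ω) ∂ R)
        → g =ᵐ[R] qd) := by
  intro g hgmeas hg0 hgint hgmean hgll hglq
  set Z := ∫ ω', Real.exp (-lam * Y ω') ∂ R with hZ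
  have hZpos : 0 < Z := integral_exp_pos hexp
  have hqdpos : ∀ ω, 0 < qd ω := by
    intro ω; rw [hqd]; exact div_pos (Real.exp_pos _) hZpos
  have hlogqd : ∀ ω, Real.log (qd ω) = -lam * Y ω - Real.log Z := by
    intro ω; rw [hqd]
    simp only
    rw [Real.log_div (Real.exp_ne_zero _) hZpos.ne', Real.log_exp]
  -- integrability / normalization of qd
  have hqdint : Integrable qd R := by rw [hqd]; exact hexp.div_const Z
  have hqdint1 : ∫ ω, qd ω ∂ R = 1 := by
    simp only [hqd]; rw [integral_div]; exact div_self hZpos.ne'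
  have hqdYint : Integrable (fun ω => qd ω * Y ω) R := by
    have := hexpY.div_const Z
    refine this.congr (Filter.Eventually.of_forall fun ω => ?_)
    rw [hqd]; ring
  have hqdY : ∫ ω, qd ω * Y ω ∂ R = mu := by
    have hpt : ∀ ω, qd ω * Y ω = Y ω * Real.exp (-lam * Y ω) / Z := by
      intro ω; rw [hqd]; ring
    simp only [hpt]
    rw [integral_div]; exact hlam
  -- value of ∫ qd log qd
  have hqdll : ∫ ω, qd ω * Real.log (qd ω) ∂ R = -lam * mu - Real.log Z := by
    have hpt : ∀ ω, qd ω * Real.log (qd ω)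
        = -lam * (qd ω * Y ω) - Real.log Z * qd ω := by
      intro ω; rw [hlogqd ω]; ring
    simp only [hpt]
    rw [integral_sub (hqdYint.const_mul _) (hqdint.const_mul _),
      integral_const_mul, integral_const_mul, hqdY, hqdint1]
    ring
  -- g is integrable
  have hgint' : Integrable g R := by
    by_contra h
    rw [integral_undef h] at hgint
    norm_num at hgint
  -- a.e. identity: g log qd = g log g - g log (g/qd)
  have hgae : ∀ᵐ ω ∂ R, g ω * Real.log (qd ω)
      = g ω * Real.log (g ω) - g ω * Real.log (g ω / qd ω) := by
    filter_upwards [hg0] with ω hg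
    rcases eq_or_lt_of_le hg with h0 | hpos
    · simp [← h0]
    · rw [Real.log_div hpos.ne' (hqdpos ω).ne']; ring
  have hglogqd_int : Integrable (fun ω => g ω * Real.log (qd ω)) R :=
    (hgll.sub hglq).congr (by filter_upwards [hgae] with ω h; exact h.symm)
  -- value of ∫ g log qd
  have hneg : Integrable (fun ω => -lam * (g ω * Y ω)) R := by
    have h1 : Integrable (fun ω => g ω * Real.log (qd ω) + Real.log Z * g ω) R :=
      hglogqd_int.add (hgint'.const_mul (Real.log Z))
    refine h1.congr (Filter.Eventually.of_forall fun ω => ?_)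
    simp only
    rw [hlogqd ω]; ring
  have hglq_val : ∫ ω, g ω * Real.log (qd ω) ∂ R = -lam * mu - Real.log Z := by
    have hpt : ∀ ω, g ω * Real.log (qd ω)
        = -lam * (g ω * Y ω) - Real.log Z * g ω := by
      intro ω; rw [hlogqd ω]; ring
    simp only [hpt]
    rw [integral_sub hneg (hgint'.const_mul _), integral_const_mul,
      integral_const_mul, hgmean, hgint]
    ring
  -- the Pythagorean split
  have hsplit : ∫ ω, g ω * Real.log (g ω) ∂ R
      = (∫ ω, g ω * Real.log (g ω / qd ω) ∂ R)
        + ∫ ω, g ω * Real.log (qd ω) ∂ R := by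
    have h := integral_congr_ae hgae
    rw [integral_sub hgll hglq] at h
    linarith
  have hpyth : ∫ ω, g ω * Real.log (g ω) ∂ R
      = (∫ ω, g ω * Real.log (g ω / qd ω) ∂ R)
        + ∫ ω, qd ω * Real.log (qd ω) ∂ R := by
    rw [hsplit, hglq_val, hqdll]
  -- nonnegativity: the auxiliary function h
  have hh_int : Integrable
      (fun ω => g ω * Real.log (g ω / qd ω) - g ω + qd ω) R :=
    (hglq.sub hgint').add hqdint
  have hh_nonneg : ∀ᵐ ω ∂ R, 0 ≤ g ω * Real.log (g ω / qd ω) - g ω + qd ω := by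
    filter_upwards [hg0] with ω hg
    rcases eq_or_lt_of_le hg with h0 | hpos
    · simp [← h0]; exact (hqdpos ω).le
    · have ht : 0 < g ω / qd ω := div_pos hpos (hqdpos ω)
      have h1 := mul_le_mul_of_nonneg_left (xlogx_ge ht) (hqdpos ω).le
      rw [mul_sub, mul_one, mul_div_cancel₀ _ (hqdpos ω).ne',
        ← mul_assoc, mul_div_cancel₀ _ (hqdpos ω).ne'] at h1
      linarith
  have hh_val : ∫ ω, (g ω * Real.log (g ω / qd ω) - g ω + qd ω) ∂ R
      = ∫ ω, g ω * Real.log (g ω / qd ω) ∂ R := by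
    have hsub : Integrable (fun ω => g ω * Real.log (g ω / qd ω) - g ω) R :=
      hglq.sub hgint'
    rw [integral_add hsub hqdint, integral_sub hglq hgint', hgint, hqdint1]
    ring
  have hD_nonneg : 0 ≤ ∫ ω, g ω * Real.log (g ω / qd ω) ∂ R := by
    rw [← hh_val]; exact integral_nonneg_of_ae hh_nonneg
  refine ⟨hpyth, by linarith, ?_⟩
  intro heq
  have hD0 : ∫ ω, g ω * Real.log (g ω / qd ω) ∂ R = 0 := by linarith
  have hzero : (fun ω => g ω * Real.log (g ω / qd ω) - g ω + qd ω) =ᵐ[R] 0 :=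
    (integral_eq_zero_iff_of_nonneg_ae hh_nonneg hh_int).mp (by rw [hh_val, hD0])
  filter_upwards [hzero, hg0] with ω hz hg
  simp only [Pi.zero_apply] at hz
  rcases eq_or_lt_of_le hg with h0 | hpos
  · exfalso
    rw [← h0] at hz
    simp at hz
    exact (hqdpos ω).ne' hz
  · by_contra hne
    have ht : 0 < g ω / qd ω := div_pos hpos (hqdpos ω)
    have ht1 : g ω / qd ω ≠ 1 := fun h =>
      hne ((div_eq_one_iff_eq (hqdpos ω).ne').mp h)
    have h1 := mul_lt_mul_of_pos_left (xlogx_gt ht ht1) (hqdpos ω)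
    rw [mul_sub, mul_one, mul_div_cancel₀ _ (hqdpos ω).ne',
      ← mul_assoc, mul_div_cancel₀ _ (hqdpos ω).ne'] at h1
    linarith
end

section
/- Let Q₁, ..., Qₘ be probability measures equivalent to P, each satisfying a linear constraint E^{Q_i}[Φ_i] = 0 and each having finite KL divergence to P. If Q† minimizes Σ π_i D_KL(Q ‖ Q_i) subject to E^Q[Y] = E_P[Y] (with π_i > 0 summing to 1), then D_KL(Q† ‖ Q^b) ≤ D_KL(Q̃ ‖ Q^b) for any other feasible Q̃, where Q^b is the unconstrained KL barycentre of the Q_i. Equivalently, Q† is also the KL projection of Q^b onto the affine constraint set {Q : E^Q[Y] = E_P[Y]}. -/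
open MeasureTheory Real Finset

/-- The constrained minimizer of the weighted KL objective is also the KL projection of the
unconstrained barycentre `Q^b` onto the affine constraint set `{Q : E^Q[Y] = E_P[Y]}`. -/
theorem constrained_minimizer_is_projection
    {Ω : Type*} [MeasurableSpace Ω] (P : Measure Ω) [IsProbabilityMeasure P]
    (m : ℕ) (f : Fin m → Ω → ℝ) (w : Fin m → ℝ)
    (hw : ∀ i, 0 < w i) (hws : ∑ i, w i = 1)
    (hfmeas : ∀ i, Measurable (f i))
    (hfpos : ∀ i, ∀ᵐ ω ∂P, 0 < f i ω)
    (hfint : ∀ i, Integrable (f i) P) (hfone : ∀ i, ∫ ω, f i ω ∂P = 1)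
    -- each Q_i satisfies a linear constraint and has finite KL divergence to P
    (Φ : Fin m → Ω → ℝ) (hconstr : ∀ i, ∫ ω, f i ω * Φ i ω ∂P = 0)
    (hKLfin : ∀ i, Integrable (fun ω => f i ω * Real.log (f i ω)) P)
    (hprodint : Integrable (fun ω => ∏ i, f i ω ^ w i) P)
    (Z : ℝ) (hZ : Z = ∫ ω, ∏ i, f i ω ^ w i ∂P) (hZpos : 0 < Z)
    (hb : Ω → ℝ) (hhb : hb = fun ω => (∏ i, f i ω ^ w i) / Z)
    (Y : Ω → ℝ) (hYmeas : Measurable Y) (hYint : Integrable Y P)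
    -- Feasibility of a density g:
    (Feas : (Ω → ℝ) → Prop)
    (hFeas : ∀ g, Feas g ↔ (Measurable g ∧ (∀ᵐ ω ∂P, 0 ≤ g ω) ∧ (∫ ω, g ω ∂P = 1) ∧
        (∫ ω, g ω * Y ω ∂P = ∫ ω, Y ω ∂P) ∧
        (∀ i, Integrable (fun ω => g ω * Real.log (g ω / f i ω)) P) ∧
        Integrable (fun ω => g ω * Real.log (g ω / hb ω)) P))
    (qd : Ω → ℝ) (hqdFeas : Feas qd)
    -- Q† minimizes the weighted KL objective over the feasible set:
    (hqdmin : ∀ g, Feas g →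
        ∑ i, w i * ∫ ω, qd ω * Real.log (qd ω / f i ω) ∂P
          ≤ ∑ i, w i * ∫ ω, g ω * Real.log (g ω / f i ω) ∂P) :
    ∀ g, Feas g →
      (∫ ω, qd ω * Real.log (qd ω / hb ω) ∂P)
        ≤ ∫ ω, g ω * Real.log (g ω / hb ω) ∂P := by
  have key : ∀ g, Feas g → ∑ i, w i * ∫ ω, g ω * Real.log (g ω / f i ω) ∂P
      = (∫ ω, g ω * Real.log (g ω / hb ω) ∂P) - Real.log Z := by
    intro g hg
    rw [hFeas] at hg
    obtain ⟨hgm, hgnn, hgone, hgY, hgint, hgintb⟩ := hg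
    have hgInt : Integrable g P := by
      by_contra h
      rw [integral_undef h] at hgone; norm_num at hgone
    have hsum : ∑ i, w i * ∫ ω, g ω * Real.log (g ω / f i ω) ∂P
        = ∫ ω, ∑ i, w i * (g ω * Real.log (g ω / f i ω)) ∂P := by
      rw [integral_finset_sum _ (fun i _ => (hgint i).const_mul (w i))]
      exact Finset.sum_congr rfl fun i _ => (integral_const_mul _ _).symm
    rw [hsum]
    have hae : ∀ᵐ ω ∂P, ∑ i, w i * (g ω * Real.log (g ω / f i ω))
        = g ω * Real.log (g ω / hb ω) - Real.log Z * g ω := by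
      have hall : ∀ᵐ ω ∂P, ∀ i, 0 < f i ω := ae_all_iff.mpr hfpos
      filter_upwards [hall, hgnn] with ω hf hgω
      by_cases hg0 : g ω = 0
      · simp [hg0]
      have hgpos : 0 < g ω := lt_of_le_of_ne hgω (Ne.symm hg0)
      have hprodpos : 0 < ∏ i, f i ω ^ w i :=
        Finset.prod_pos (fun i _ => Real.rpow_pos_of_pos (hf i) _)
      have hhbω : hb ω = (∏ i, f i ω ^ w i) / Z := by rw [hhb]
      have hhbpos : 0 < hb ω := by rw [hhbω]; positivity
      have hlogprod : Real.log (∏ i, f i ω ^ w i) = ∑ i, w i * Real.log (f i ω) := by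
        rw [Real.log_prod (fun i _ => (Real.rpow_pos_of_pos (hf i) _).ne')]
        exact Finset.sum_congr rfl fun i _ => Real.log_rpow (hf i) _
      have hldiv : ∀ i, Real.log (g ω / f i ω) = Real.log (g ω) - Real.log (f i ω) :=
        fun i => Real.log_div hgpos.ne' (hf i).ne'
      have hlb : Real.log (g ω / hb ω)
          = Real.log (g ω) - ((∑ i, w i * Real.log (f i ω)) - Real.log Z) := by
        rw [Real.log_div hgpos.ne' hhbpos.ne', hhbω,
          Real.log_div hprodpos.ne' hZpos.ne', hlogprod]
      simp_rw [hldiv, hlb]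
      have expand : ∑ i, w i * (g ω * (Real.log (g ω) - Real.log (f i ω)))
          = (∑ i, w i) * (g ω * Real.log (g ω)) - g ω * ∑ i, w i * Real.log (f i ω) := by
        rw [Finset.sum_mul, Finset.mul_sum, ← Finset.sum_sub_distrib]
        exact Finset.sum_congr rfl fun i _ => by ring
      rw [expand, hws]
      ring
    rw [integral_congr_ae hae, integral_sub hgintb (hgInt.const_mul _),
      integral_const_mul, hgone, mul_one]
  intro g hg
  have h1 := key qd hqdFeas
  have h2 := key g hg
  have h3 := hqdmin g hg
  linarith
end
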